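/- Let X be a set, k ≥ 1 a natural number, ℱ a finite family of predicates on k-tuples from X, and 1 ≤ i < k. Suppose L₁, …, L_i are finite subsets of X such that for every f ∈ ℱ: Alt∃(L₁,…,L_i, X,…,X; f) ↔ Alt∃(X,…,X; f) and Alt∀(L₁,…,L_i, X,…,X; f) ↔ Alt∀(X,…,X; f). Then there exists a finite subset L_{i+1} ⊆ X with |L_{i+1}| ≤ 2·|ℱ|·|L₁|·…·|L_i| such that for every f ∈ ℱ: Alt∃(L₁,…,L_{i+1}, X,…,X; f) ↔ Alt∃(X,…,X; f) and Alt∀(L₁,…,L_{i+1}, X,…,X; f) ↔ Alt∀(X,…,X; f). (This is the induction step of the quantifier-range restriction lemma: one additional quantifier range can be restricted to a finite set obtained by adding, for each f ∈ ℱ and each tuple in L₁×…×L_i, one witness or counterexample for the (i+1)-st quantifier.) -/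

import Mathlib

namespace Stmt1

/-- Alternating quantified statement: `Alt b k S f` where `b = true` starts with `∃`
and `b = false` starts with `∀`; the `j`-th quantified variable ranges over `S j`. -/
def Alt {X : Type*} : Bool → (k : ℕ) → (Fin k → Set X) → ((Fin k → X) → Prop) → Prop
  | _, 0, _, f => f finZeroElim
  | b, (k + 1), S, f =>
    if b then ∃ u ∈ S 0, Alt (!b) k (fun i => S i.succ) (fun v => f (Fin.cons u v))
    else ∀ u ∈ S 0, Alt (!b) k (fun i => S i.succ) (fun v => f (Fin.cons u v))

/-- Ranges where the first `i` quantifiers range over the finite sets `L 0, …, L (i-1)`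
and the remaining quantifiers range over all of `X`. -/
def prefRanges {X : Type*} (k i : ℕ) (L : Fin i → Finset X) : Fin k → Set X :=
  fun j => if h : (j : ℕ) < i then (↑(L ⟨j, h⟩) : Set X) else Set.univ


def bflip : ℕ → Bool → Bool
  | 0, b => b
  | n+1, b => bflip n (!b)

lemma bflip_not (n : ℕ) (b : Bool) : bflip n (!b) = !(bflip n b) := by
  induction n generalizing b with
  | zero => rfl
  | succ n ih => exact ih (!b)

lemma bflip_bflip (n : ℕ) (b : Bool) : bflip n (bflip n b) = b := by
  induction n generalizing b with
  | zero => rfl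
  | succ n ih =>
    show bflip n (!(bflip n (!b))) = b
    rw [bflip_not n b, Bool.not_not]
    exact ih b

def fixPref {X : Type*} (k i : ℕ) (u : Fin i → X) (S : Set X) : Fin k → Set X :=
  fun j => if h : (j : ℕ) < i then {u ⟨j, h⟩} else if (j : ℕ) = i then S else Set.univ

lemma fixPref_lt {X : Type*} {k i : ℕ} {u : Fin i → X} {S : Set X} {j : Fin k}
    (h : (j : ℕ) < i) : fixPref k i u S j = {u ⟨j, h⟩} := dif_pos h

lemma fixPref_eq {X : Type*} {k i : ℕ} {u : Fin i → X} {S : Set X} {j : Fin k}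
    (h : (j : ℕ) = i) : fixPref k i u S j = S := by
  rw [fixPref, dif_neg (by omega), if_pos h]

lemma fixPref_gt {X : Type*} {k i : ℕ} {u : Fin i → X} {S : Set X} {j : Fin k}
    (h : i < (j : ℕ)) : fixPref k i u S j = Set.univ := by
  rw [fixPref, dif_neg (by omega), if_neg (by omega)]

lemma alt_true {X : Type*} (k : ℕ) (S : Fin (k+1) → Set X) (f : (Fin (k+1) → X) → Prop) :
    Alt true (k+1) S f ↔ ∃ u ∈ S 0, Alt false k (fun i => S i.succ) (fun v => f (Fin.cons u v)) := by
  simp [Alt]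

lemma alt_false {X : Type*} (k : ℕ) (S : Fin (k+1) → Set X) (f : (Fin (k+1) → X) → Prop) :
    Alt false (k+1) S f ↔ ∀ u ∈ S 0, Alt true k (fun i => S i.succ) (fun v => f (Fin.cons u v)) := by
  simp [Alt]

lemma alt_cons {X : Type*} {k : ℕ} (b : Bool) {S : Fin (k+1) → Set X}
    {f : (Fin (k+1) → X) → Prop} {a : X} (hS : S 0 = {a}) :
    Alt b (k+1) S f ↔ Alt (!b) k (fun j => S j.succ) (fun v => f (Fin.cons a v)) := by
  cases b
  · rw [alt_false, hS]; simp
  · rw [alt_true, hS]; simp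

lemma snoc_mk_lt {α : Type*} {n : ℕ} (u : Fin n → α) (x : α) {j : ℕ} (h : j < n)
    (h' : j < n + 1) : (Fin.snoc u x : Fin (n+1) → α) ⟨j, h'⟩ = u ⟨j, h⟩ := by
  have : (⟨j, h'⟩ : Fin (n+1)) = Fin.castSucc ⟨j, h⟩ := rfl
  rw [this, Fin.snoc_castSucc]

lemma snoc_mk_last {α : Type*} {n : ℕ} (u : Fin n → α) (x : α) (h' : n < n + 1) :
    (Fin.snoc u x : Fin (n+1) → α) ⟨n, h'⟩ = x := by
  have : (⟨n, h'⟩ : Fin (n+1)) = Fin.last n := rfl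
  rw [this, Fin.snoc_last]

lemma snoc_comp_succ {α : Type*} {n : ℕ} (u : Fin (n+1) → α) (x : α) :
    (fun m : Fin (n+1) => (Fin.snoc u x : Fin (n+2) → α) m.succ) = (Fin.snoc (fun m : Fin n => u m.succ) x : Fin (n+1) → α) := by
  funext m
  cases m using Fin.lastCases with
  | last => rw [Fin.succ_last, Fin.snoc_last, Fin.snoc_last]
  | cast m => rw [Fin.succ_castSucc, Fin.snoc_castSucc, Fin.snoc_castSucc]

lemma fixPref_succ {X : Type*} (k i : ℕ) (u : Fin (i+1) → X) (S : Set X) (j : Fin k) :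
    fixPref (k+1) (i+1) u S j.succ = fixPref k i (fun m => u m.succ) S j := by
  simp only [fixPref, Fin.val_succ]
  split_ifs with h1 h2 h3 h4 h5 <;> first | rfl | omega


lemma alt_strip {X : Type*} (i : ℕ) :
    ∀ (k : ℕ), i < k → ∀ (b : Bool) (u : Fin i → X) (S : Set X) (f : (Fin k → X) → Prop),
      Alt b k (fixPref k i u S) f ↔
        if bflip i b then
          ∃ x ∈ S, Alt b k (fixPref k (i+1) (Fin.snoc u x) Set.univ) f
        else
          ∀ x ∈ S, Alt b k (fixPref k (i+1) (Fin.snoc u x) Set.univ) f := by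
  induction i with
  | zero =>
    intro k hk b u S f
    obtain ⟨k', rfl⟩ : ∃ k', k = k'+1 := ⟨k-1, by omega⟩
    have h0 : fixPref (k'+1) 0 u S 0 = S := fixPref_eq (by simp)
    have hS : ∀ x : X, fixPref (k'+1) 1 (Fin.snoc u x) Set.univ 0 = {x} := by
      intro x
      rw [fixPref_lt (show ((0:Fin (k'+1)):ℕ) < 1 by simp)]
      exact congrArg (fun y => ({y} : Set X)) (snoc_mk_last u x _)
    have htail : ∀ x : X, (fun j : Fin k' => fixPref (k'+1) 0 u S j.succ)
        = (fun j : Fin k' => fixPref (k'+1) 1 (Fin.snoc u x) Set.univ j.succ) := by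
      intro x; funext j
      rw [fixPref_gt (by simp)]
      by_cases h : ((j.succ : Fin (k'+1)) : ℕ) = 1
      · rw [fixPref_eq h]
      · rw [fixPref_gt (by simp only [Fin.val_succ] at h ⊢; omega)]
    have key : ∀ x : X,
        Alt (!b) k' (fun j : Fin k' => fixPref (k'+1) 0 u S j.succ) (fun v => f (Fin.cons x v)) ↔
        Alt b (k'+1) (fixPref (k'+1) 1 (Fin.snoc u x) Set.univ) f := by
      intro x
      rw [alt_cons b (hS x), ← htail x]
    cases b
    · rw [if_neg (show ¬(bflip 0 false = true) by simp [bflip])]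
      rw [alt_false, h0]
      exact forall₂_congr fun x _ => key x
    · rw [if_pos (show bflip 0 true = true by simp [bflip])]
      rw [alt_true, h0]
      exact exists_congr fun x => and_congr_right fun _ => key x
  | succ i ih =>
    intro k hk b u S f
    obtain ⟨k', rfl⟩ : ∃ k', k = k'+1 := ⟨k-1, by omega⟩
    have hik' : i < k' := by omega
    have hzero : (⟨((0:Fin (k'+1)):ℕ), by simp⟩ : Fin (i+1)) = 0 := by ext; simp
    have h0 : fixPref (k'+1) (i+1) u S 0 = {u 0} := by
      rw [fixPref_lt (show ((0:Fin (k'+1)):ℕ) < i+1 by simp)]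
      rw [hzero]
    rw [alt_cons b h0]
    have ht : (fun j : Fin k' => fixPref (k'+1) (i+1) u S j.succ)
        = fixPref k' i (fun m => u m.succ) S := by
      funext j; exact fixPref_succ k' i u S j
    rw [ht, ih k' hik' (!b) (fun m => u m.succ) S (fun v => f (Fin.cons (u 0) v))]
    have key : ∀ x : X,
        Alt (!b) k' (fixPref k' (i+1) (Fin.snoc (fun m => u m.succ) x) Set.univ)
          (fun v => f (Fin.cons (u 0) v)) ↔
        Alt b (k'+1) (fixPref (k'+1) (i+1+1) (Fin.snoc u x) Set.univ) f := by
      intro x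
      have hS : fixPref (k'+1) (i+1+1) (Fin.snoc u x : Fin (i+2) → X) Set.univ 0 = {u 0} := by
        rw [fixPref_lt (show ((0:Fin (k'+1)):ℕ) < i+2 by simp)]
        congr 1
      rw [alt_cons b hS]
      have ht2 : (fun j : Fin k' => fixPref (k'+1) (i+1+1) (Fin.snoc u x : Fin (i+2) → X) Set.univ j.succ)
          = fixPref k' (i+1) (Fin.snoc (fun m => u m.succ) x) Set.univ := by
        funext j
        rw [fixPref_succ k' (i+1) (Fin.snoc u x) Set.univ j, snoc_comp_succ u x]
      rw [ht2]
    rw [show bflip (i+1) b = bflip i (!b) from rfl]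
    cases hb : bflip i (!b)
    · simp only [Bool.false_eq_true, if_false]
      exact forall₂_congr fun x _ => key x
    · simp only [if_true]
      exact exists_congr fun x => and_congr_right fun _ => key x


def mixed {X : Type*} (k i : ℕ) (M : Fin i → Finset X) (S : Set X) : Fin k → Set X :=
  fun j => if h : (j : ℕ) < i then (↑(M ⟨j, h⟩) : Set X) else if (j : ℕ) = i then S else Set.univ

lemma mixed_lt {X : Type*} {k i : ℕ} {M : Fin i → Finset X} {S : Set X} {j : Fin k}
    (h : (j : ℕ) < i) : mixed k i M S j = ↑(M ⟨j, h⟩) := dif_pos h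

lemma alt_main {X : Type*} (i : ℕ) :
    ∀ (k : ℕ), i < k → ∀ (b : Bool) (M : Fin i → Finset X) (S₁ S₂ : Set X)
      (f : (Fin k → X) → Prop),
      (∀ (b' : Bool) (u : Fin i → X), (∀ m, u m ∈ M m) →
        (Alt b' k (fixPref k i u S₁) f ↔ Alt b' k (fixPref k i u S₂) f)) →
      (Alt b k (mixed k i M S₁) f ↔ Alt b k (mixed k i M S₂) f) := by
  induction i with
  | zero =>
    intro k hk b M S₁ S₂ f H
    have he : ∀ S : Set X, mixed k 0 M S = fixPref k 0 Fin.elim0 S := by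
      intro S; funext j; simp [mixed, fixPref]
    rw [he S₁, he S₂]
    exact H b Fin.elim0 (fun m => m.elim0)
  | succ i ih =>
    intro k hk b M S₁ S₂ f H
    obtain ⟨k', rfl⟩ : ∃ k', k = k'+1 := ⟨k-1, by omega⟩
    have hik' : i < k' := by omega
    have h00 : (⟨((0:Fin (k'+1)):ℕ), (by simp : ((0:Fin (k'+1)):ℕ) < i+1)⟩ : Fin (i+1)) = 0 := by
      ext; simp
    have hzero : ∀ S : Set X, mixed (k'+1) (i+1) M S 0 = ↑(M 0) := by
      intro S
      rw [mixed_lt (show ((0:Fin (k'+1)):ℕ) < i+1 by simp), h00]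
    have ht : ∀ S : Set X, (fun j : Fin k' => mixed (k'+1) (i+1) M S j.succ)
        = mixed k' i (fun m => M m.succ) S := by
      intro S; funext j
      simp only [mixed, Fin.val_succ]
      split_ifs <;> first | rfl | omega
    have key : ∀ u₀ : X, u₀ ∈ (↑(M 0) : Set X) →
        (Alt (!b) k' (mixed k' i (fun m => M m.succ) S₁) (fun v => f (Fin.cons u₀ v)) ↔
         Alt (!b) k' (mixed k' i (fun m => M m.succ) S₂) (fun v => f (Fin.cons u₀ v))) := by
      intro u₀ hu₀
      refine ih k' hik' (!b) (fun m => M m.succ) S₁ S₂ _ ?_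
      intro b' u' hu'
      have hcons : ∀ m : Fin (i+1), (Fin.cons u₀ u' : Fin (i+1) → X) m ∈ M m := by
        intro m
        cases m using Fin.cases with
        | zero => simpa using hu₀
        | succ m => simpa using hu' m
      have hH := H (!b') (Fin.cons u₀ u') hcons
      have conv : ∀ S : Set X,
          Alt (!b') (k'+1) (fixPref (k'+1) (i+1) (Fin.cons u₀ u') S) f ↔
          Alt b' k' (fixPref k' i u' S) (fun v => f (Fin.cons u₀ v)) := by
        intro S
        have hS : fixPref (k'+1) (i+1) (Fin.cons u₀ u' : Fin (i+1) → X) S 0 = {u₀} := by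
          rw [fixPref_lt (show ((0:Fin (k'+1)):ℕ) < i+1 by simp), h00, Fin.cons_zero]
        rw [alt_cons (!b') hS, Bool.not_not]
        have ht2 : (fun j : Fin k' =>
            fixPref (k'+1) (i+1) (Fin.cons u₀ u' : Fin (i+1) → X) S j.succ)
            = fixPref k' i u' S := by
          funext j
          rw [fixPref_succ]
          have hcs : (fun m : Fin i => (Fin.cons u₀ u' : Fin (i+1) → X) m.succ) = u' := by
            funext m; simp
          rw [hcs]
        rw [ht2]
      exact (conv S₁).symm.trans (hH.trans (conv S₂))
    cases b
    · rw [alt_false, alt_false, hzero S₁, hzero S₂, ht S₁, ht S₂]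
      exact forall₂_congr fun u₀ hu₀ => key u₀ hu₀
    · rw [alt_true, alt_true, hzero S₁, hzero S₂, ht S₁, ht S₂]
      exact exists_congr fun u₀ => and_congr_right fun hu₀ => key u₀ hu₀


lemma mixed_eq {X : Type*} {k i : ℕ} {M : Fin i → Finset X} {S : Set X} {j : Fin k}
    (h : (j : ℕ) = i) : mixed k i M S j = S := by
  rw [mixed, dif_neg (by omega), if_pos h]

lemma mixed_gt {X : Type*} {k i : ℕ} {M : Fin i → Finset X} {S : Set X} {j : Fin k}
    (h : i < (j : ℕ)) : mixed k i M S j = Set.univ := by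
  rw [mixed, dif_neg (by omega), if_neg (by omega)]

lemma pref_lt {X : Type*} {k n : ℕ} {L : Fin n → Finset X} {j : Fin k}
    (h : (j : ℕ) < n) : prefRanges k n L j = ↑(L ⟨j, h⟩) := dif_pos h

lemma pref_ge {X : Type*} {k n : ℕ} {L : Fin n → Finset X} {j : Fin k}
    (h : ¬ (j : ℕ) < n) : prefRanges k n L j = Set.univ := dif_neg h

lemma pref_snoc {X : Type*} (k i : ℕ) (L : Fin i → Finset X) (L' : Finset X) :
    prefRanges k (i+1) (Fin.snoc L L') = mixed k i L (↑L' : Set X) := by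
  funext j
  rcases lt_trichotomy ((j : Fin k) : ℕ) i with h | h | h
  · rw [pref_lt (show (j:ℕ) < i+1 by omega), mixed_lt h, snoc_mk_lt L L' h]
  · rw [pref_lt (show (j:ℕ) < i+1 by omega), mixed_eq h]
    have hlast : (⟨(j:ℕ), by omega⟩ : Fin (i+1)) = Fin.last i := by ext; simp [h]
    rw [hlast, Fin.snoc_last]
  · rw [pref_ge (by omega), mixed_gt h]

lemma mixed_univ {X : Type*} (k i : ℕ) (L : Fin i → Finset X) :
    mixed k i L Set.univ = prefRanges k i L := by
  funext j
  rcases lt_trichotomy ((j : Fin k) : ℕ) i with h | h | h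
  · rw [mixed_lt h, pref_lt h]
  · rw [mixed_eq h, pref_ge (by omega)]
  · rw [mixed_gt h, pref_ge (by omega)]

lemma alt_isEmpty {X : Type*} [IsEmpty X] (b : Bool) (k : ℕ) (S : Fin (k+1) → Set X)
    (f : (Fin (k+1) → X) → Prop) : Alt b (k+1) S f ↔ b = false := by
  cases b
  · rw [alt_false]
    exact iff_of_true (fun u _ => isEmptyElim u) rfl
  · rw [alt_true]
    exact iff_of_false (by rintro ⟨u, -, -⟩; exact isEmptyElim u) (by simp)

/-- Induction step of the quantifier-range restriction lemma. -/
theorem quantifier_range_restriction_step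
    {X : Type*} {ι : Type*} (k i : ℕ) (hi : 1 ≤ i) (hik : i < k)
    (F : Finset ι) (f : ι → (Fin k → X) → Prop)
    (L : Fin i → Finset X)
    (hL : ∀ j ∈ F,
      (Alt true k (prefRanges k i L) (f j) ↔ Alt true k (fun _ => Set.univ) (f j)) ∧
      (Alt false k (prefRanges k i L) (f j) ↔ Alt false k (fun _ => Set.univ) (f j))) :
    ∃ L' : Finset X, L'.card ≤ 2 * F.card * ∏ m, (L m).card ∧
      ∀ j ∈ F,
        (Alt true k (prefRanges k (i + 1) (Fin.snoc L L')) (f j) ↔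
          Alt true k (fun _ => Set.univ) (f j)) ∧
        (Alt false k (prefRanges k (i + 1) (Fin.snoc L L')) (f j) ↔
          Alt false k (fun _ => Set.univ) (f j)) := by
  classical
  rcases isEmpty_or_nonempty X with hX | hX
  · refine ⟨∅, by simp, ?_⟩
    intro j hj
    obtain ⟨k', rfl⟩ : ∃ k', k = k'+1 := ⟨k-1, by omega⟩
    constructor
    · rw [alt_isEmpty, alt_isEmpty]
    · rw [alt_isEmpty, alt_isEmpty]
  · inhabit X
    set bE := bflip i true with hbE
    set bA := bflip i false with hbA
    have hwitE : ∀ (j : ι) (u : Fin i → X), ∃ e : X,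
        (∃ x, Alt bE k (fixPref k (i+1) (Fin.snoc u x) Set.univ) (f j)) →
        Alt bE k (fixPref k (i+1) (Fin.snoc u e) Set.univ) (f j) := by
      intro j u
      by_cases h : ∃ x, Alt bE k (fixPref k (i+1) (Fin.snoc u x) Set.univ) (f j)
      · exact ⟨h.choose, fun _ => h.choose_spec⟩
      · exact ⟨default, fun hh => absurd hh h⟩
    choose E hE using hwitE
    have hwitA : ∀ (j : ι) (u : Fin i → X), ∃ a : X,
        (∃ x, ¬ Alt bA k (fixPref k (i+1) (Fin.snoc u x) Set.univ) (f j)) →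
        ¬ Alt bA k (fixPref k (i+1) (Fin.snoc u a) Set.univ) (f j) := by
      intro j u
      by_cases h : ∃ x, ¬ Alt bA k (fixPref k (i+1) (Fin.snoc u x) Set.univ) (f j)
      · exact ⟨h.choose, fun _ => h.choose_spec⟩
      · exact ⟨default, fun hh => absurd hh h⟩
    choose A hA using hwitA
    set L' : Finset X := ((F ×ˢ Fintype.piFinset L).image fun p => E p.1 p.2) ∪
            ((F ×ˢ Fintype.piFinset L).image fun p => A p.1 p.2) with hL'def
    refine ⟨L', ?_, ?_⟩
    · have hc : (F ×ˢ Fintype.piFinset L).card = F.card * ∏ m, (L m).card := by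
        rw [Finset.card_product, Fintype.card_piFinset]
      have h1 := Finset.card_image_le (s := F ×ˢ Fintype.piFinset L) (f := fun p => E p.1 p.2)
      have h2 := Finset.card_image_le (s := F ×ˢ Fintype.piFinset L) (f := fun p => A p.1 p.2)
      have h3 := Finset.card_union_le ((F ×ˢ Fintype.piFinset L).image fun p => E p.1 p.2)
        ((F ×ˢ Fintype.piFinset L).image fun p => A p.1 p.2)
      have h4 : 2 * F.card * ∏ m, (L m).card
          = (F ×ˢ Fintype.piFinset L).card + (F ×ˢ Fintype.piFinset L).card := by
        rw [hc]; ring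
      rw [hL'def]
      omega
    · intro j hj
      have Hj : ∀ (b' : Bool) (u : Fin i → X), (∀ m, u m ∈ L m) →
          (Alt b' k (fixPref k i u (↑L' : Set X)) (f j) ↔
            Alt b' k (fixPref k i u Set.univ) (f j)) := by
        intro b' u hu
        have humem : u ∈ Fintype.piFinset L := by
          rw [Fintype.mem_piFinset]; exact hu
        rw [alt_strip i k hik b' u (↑L' : Set X) (f j),
          alt_strip i k hik b' u Set.univ (f j)]
        cases hq : bflip i b'
        · have hb' : b' = bA := by
            have hbb := bflip_bflip i b'
            rw [hq] at hbb
            exact hbb.symm.trans hbA.symm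
          simp only [Bool.false_eq_true, if_false]
          constructor
          · intro h x _
            by_contra hx
            rw [hb'] at hx h
            refine hA j u ⟨x, hx⟩ (h (A j u) ?_)
            exact Finset.mem_coe.mpr (Finset.mem_union_right _
              (Finset.mem_image.mpr ⟨(j, u), Finset.mem_product.mpr ⟨hj, humem⟩, rfl⟩))
          · intro h x _
            exact h x (Set.mem_univ x)
        · have hb' : b' = bE := by
            have hbb := bflip_bflip i b'
            rw [hq] at hbb
            exact hbb.symm.trans hbE.symm
          simp only [if_true]
          constructor
          · rintro ⟨x, -, hx⟩
            exact ⟨x, Set.mem_univ x, hx⟩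
          · rintro ⟨x, -, hx⟩
            rw [hb'] at hx ⊢
            refine ⟨E j u, ?_, hE j u ⟨x, hx⟩⟩
            exact Finset.mem_coe.mpr (Finset.mem_union_left _
              (Finset.mem_image.mpr ⟨(j, u), Finset.mem_product.mpr ⟨hj, humem⟩, rfl⟩))
      have hmain : ∀ b : Bool,
          Alt b k (mixed k i L (↑L' : Set X)) (f j) ↔ Alt b k (mixed k i L Set.univ) (f j) :=
        fun b => alt_main i k hik b L (↑L' : Set X) Set.univ (f j) Hj
      have hps : prefRanges k (i+1) (Fin.snoc L L') = mixed k i L (↑L' : Set X) :=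
        pref_snoc k i L L'
      have hpu : mixed k i L Set.univ = prefRanges k i L := mixed_univ k i L
      constructor
      · rw [hps, hmain true, hpu]
        exact (hL j hj).1
      · rw [hps, hmain false, hpu]
        exact (hL j hj).2

end Stmt1
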